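/- Let K be a field, V a K-vector space, ∇ : V → V a K-linear map, T_1,…,T_m pairwise distinct nonzero elements of K, and H_1,…,H_m ∈ V with ∇H_i = T_i·H_i for each i. Set Φ_μ := Σ_{j=1}^{m} (∏_{s≠j}(1 − T_j/T_s))^{-1}·H_j. Then for every nonempty subset S ⊆ {1,…,m}: ∏_{i ∉ S} (id − T_i^{-1}∇) applied to Φ_μ equals Σ_{i ∈ S} (∏_{r ∈ S, r ≠ i}(1 − T_i/T_r))^{-1}·H_i. -/

import Mathlib

/-- The distinguished element `Φ_μ = ∑_j (∏_{s≠j} (1 - T_j/T_s))⁻¹ • H_j`. -/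
noncomputable def Phimu {K : Type*} [Field K] {V : Type*} [AddCommGroup V] [Module K V]
    (m : ℕ) (T : Fin m → K) (H : Fin m → V) : V :=
  ∑ j, (∏ s ∈ Finset.univ.erase j, (1 - T j / T s))⁻¹ • H j

/-- Proposition 3.5 of Bergeron–Garsia (formula 3.26): for every nonempty
`S ⊆ {1,…,m}`, `∏_{i ∉ S}(1 - ∇/T_i)` applied to `Φ_μ` equals
`∑_{i ∈ S} (∏_{r ∈ S, r ≠ i} (1 - T_i/T_r))⁻¹ • H_i`. -/
theorem statement13 {K : Type*} [Field K] {V : Type*} [AddCommGroup V] [Module K V]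
    (m : ℕ) (T : Fin m → K) (hT0 : ∀ i, T i ≠ 0) (hTinj : Function.Injective T)
    (nabla : Module.End K V) (H : Fin m → V)
    (heig : ∀ i, nabla (H i) = T i • H i)
    (S : Finset (Fin m)) (hS : S.Nonempty) :
    Polynomial.aeval nabla
        (∏ i ∈ Sᶜ, (1 - Polynomial.C (T i)⁻¹ * Polynomial.X))
        (Phimu m T H) =
      ∑ i ∈ S, (∏ r ∈ S.erase i, (1 - T i / T r))⁻¹ • H i := by
  classical
  -- action of any polynomial in nabla on an eigenvector
  have key : ∀ (p : Polynomial K) (j : Fin m),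
      Polynomial.aeval nabla p (H j) = (Polynomial.eval (T j) p) • H j := by
    intro p j
    induction p using Polynomial.induction_on' with
    | add p q hp hq =>
      simp [map_add, LinearMap.add_apply, hp, hq, add_smul]
    | monomial n a =>
      have hpow : ∀ n : ℕ, (nabla ^ n) (H j) = (T j) ^ n • H j := by
        intro n
        induction n with
        | zero => simp
        | succ n ih =>
          rw [pow_succ, Module.End.mul_apply, heig, map_smul, ih, smul_smul,
            pow_succ, mul_comm]
      simp [Polynomial.aeval_monomial, Module.End.mul_apply, hpow,
        Module.algebraMap_end_apply, smul_smul, mul_comm]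
  set P : Polynomial K := ∏ i ∈ Sᶜ, (1 - Polynomial.C (T i)⁻¹ * Polynomial.X) with hP
  have hevalP : ∀ j, Polynomial.eval (T j) P = ∏ i ∈ Sᶜ, (1 - T j / T i) := by
    intro j
    rw [hP, Polynomial.eval_prod]
    refine Finset.prod_congr rfl fun i _ => ?_
    simp [div_eq_inv_mul]
  have main : Polynomial.aeval nabla P (Phimu m T H)
      = ∑ j, ((∏ s ∈ Finset.univ.erase j, (1 - T j / T s))⁻¹
          * ∏ i ∈ Sᶜ, (1 - T j / T i)) • H j := by
    rw [Phimu, map_sum]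
    refine Finset.sum_congr rfl fun j _ => ?_
    rw [map_smul, key, hevalP, smul_smul]
  rw [main]
  rw [← Finset.sum_subset (Finset.subset_univ S)]
  · refine Finset.sum_congr rfl fun j hj => ?_
    congr 1
    have hdisj : Disjoint Sᶜ (S.erase j) :=
      Finset.disjoint_left.2 fun x hx hx' =>
        (Finset.mem_compl.1 hx) (Finset.mem_of_mem_erase hx')
    have hunion : Sᶜ ∪ S.erase j = Finset.univ.erase j := by
      ext x
      simp only [Finset.mem_union, Finset.mem_compl, Finset.mem_erase,
        Finset.mem_univ, and_true]
      constructor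
      · rintro (hx | ⟨hx, _⟩)
        · rintro rfl; exact hx hj
        · exact hx
      · intro hx
        by_cases hxS : x ∈ S
        · exact Or.inr ⟨hx, hxS⟩
        · exact Or.inl hxS
    have hsplit : (∏ s ∈ Finset.univ.erase j, (1 - T j / T s))
        = (∏ i ∈ Sᶜ, (1 - T j / T i)) * ∏ r ∈ S.erase j, (1 - T j / T r) := by
      rw [← hunion, Finset.prod_union hdisj]
    have ha : (∏ i ∈ Sᶜ, (1 - T j / T i)) ≠ 0 := by
      refine Finset.prod_ne_zero_iff.2 fun i hi => ?_
      have hij : T j ≠ T i := fun h => (Finset.mem_compl.1 hi) (hTinj h ▸ hj)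
      rw [sub_ne_zero]
      intro h
      exact hij ((div_eq_one_iff_eq (hT0 i)).1 h.symm)
    rw [hsplit, mul_inv]
    field_simp
  · intro j _ hj
    have hjc : j ∈ Sᶜ := Finset.mem_compl.2 hj
    have : (∏ i ∈ Sᶜ, (1 - T j / T i)) = 0 :=
      Finset.prod_eq_zero hjc (by rw [div_self (hT0 j)]; ring)
    rw [this, mul_zero, zero_smul]
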